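/- The space Δ of all real-time translates of piecewise constant functions ℝ → V (constant on [nh+τ,(n+1)h+τ) for some fixed offset τ ∈ [0,h)) whose sequences of values form admissible paths in a directed graph G is sequentially compact with respect to the metric d: every sequence in Δ has a subsequence converging to an element of Δ. -/

import Mathlib

open MeasureTheory
open scoped Classical

/-- The set of bi-infinite admissible paths in the directed graph with edge relation `E`. -/
def OmegaPaths {V : Type*} (E : V → V → Prop) : Set (ℤ → V) :=
  {u | ∀ i : ℤ, E (u i) (u (i + 1))}

/-- The space `Δ` of all real-time translates of the piecewise constant extensions of
admissible paths. -/
def DeltaSpace {V : Type*} (E : V → V → Prop) (h : ℝ) : Set (ℝ → V) :=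
  {x | ∃ u ∈ OmegaPaths E, ∃ τ : ℝ, x = fun t => u ⌊(t + τ) / h⌋}

/-- The metric in integral form. -/
noncomputable def dInt {V : Type*} (h : ℝ) (x y : ℝ → V) : ℝ :=
  (1 / h) * ∫ t : ℝ, (1 / 4 ^ (⌊t / h⌋.natAbs) : ℝ) * (if x t = y t then (0 : ℝ) else 1)

section Aux

open Set Filter Real

lemma my_integrable_exp_neg_abs {b : ℝ} (hb : 0 < b) :
    Integrable fun t : ℝ => Real.exp (-b * |t|) := by
  have hIoi : IntegrableOn (fun t : ℝ => Real.exp (-b * |t|)) (Set.Ioi 0) := by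
    refine (exp_neg_integrableOn_Ioi 0 hb).congr_fun ?_ measurableSet_Ioi
    intro t ht
    show Real.exp (-b * t) = Real.exp (-b * |t|)
    rw [abs_of_pos ht]
  rw [← integrableOn_univ, ← @Iio_union_Ici _ _ (0 : ℝ), integrableOn_union,
    integrableOn_Ici_iff_integrableOn_Ioi]
  refine ⟨?_, hIoi⟩
  rw [← (Measure.measurePreserving_neg (volume : Measure ℝ)).integrableOn_comp_preimage
      (Homeomorph.neg ℝ).measurableEmbedding]
  simpa only [Function.comp_def, abs_neg, neg_preimage, neg_Iio, neg_zero] using hIoi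

lemma my_meas_aux {V : Type*} (p q : ℤ → V) (a b c : ℝ) :
    Measurable (fun t : ℝ => (1 / 4 ^ (⌊t / c⌋.natAbs) : ℝ) *
      (if p ⌊(t + a) / c⌋ = q ⌊(t + b) / c⌋ then (0 : ℝ) else 1)) := by
  have m0 : Measurable fun t : ℝ => ⌊t / c⌋ :=
    Int.measurable_floor.comp (measurable_id.div_const c)
  have mw : Measurable fun t : ℝ => (1 / 4 ^ (⌊t / c⌋.natAbs) : ℝ) :=
    (measurable_from_top (f := fun i : ℤ => (1 / 4 ^ i.natAbs : ℝ))).comp m0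
  refine mw.mul ?_
  have mpair : Measurable fun t : ℝ => (⌊(t + a) / c⌋, ⌊(t + b) / c⌋) :=
    (Int.measurable_floor.comp ((measurable_id.add_const a).div_const c)).prodMk
      (Int.measurable_floor.comp ((measurable_id.add_const b).div_const c))
  have hS : MeasurableSet {t : ℝ | p ⌊(t + a) / c⌋ = q ⌊(t + b) / c⌋} := by
    have : {t : ℝ | p ⌊(t + a) / c⌋ = q ⌊(t + b) / c⌋} =
        (fun t : ℝ => (⌊(t + a) / c⌋, ⌊(t + b) / c⌋)) ⁻¹' {z : ℤ × ℤ | p z.1 = q z.2} := rfl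
    rw [this]
    exact mpair ((Set.to_countable _).measurableSet)
  exact Measurable.ite hS measurable_const measurable_const

lemma my_w_le {h : ℝ} (hh : 0 < h) (t : ℝ) :
    (1 / 4 ^ (⌊t / h⌋.natAbs) : ℝ) ≤ 4 * Real.exp (-(Real.log 4 / h) * |t|) := by
  set s : ℝ := t / h with hs
  have habs : |s| ≤ (⌊s⌋.natAbs : ℝ) + 1 := by
    have h1 : |s| - |(⌊s⌋ : ℝ)| ≤ |s - ⌊s⌋| := abs_sub_abs_le_abs_sub _ _
    have h2 : |s - (⌊s⌋ : ℝ)| ≤ 1 := by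
      rw [abs_of_nonneg (by exact sub_nonneg.2 (Int.floor_le s))]
      linarith [Int.lt_floor_add_one s]
    have h3 : ((⌊s⌋.natAbs : ℝ)) = |(⌊s⌋ : ℝ)| := by
      rw [Nat.cast_natAbs]; push_cast; ring_nf
    rw [h3]; linarith
  have key : (1 / 4 ^ (⌊s⌋.natAbs) : ℝ) = (4 : ℝ) ^ (-(⌊s⌋.natAbs : ℝ)) := by
    rw [Real.rpow_neg (by norm_num), Real.rpow_natCast]
    exact one_div _
  rw [key]
  have h4 : (4 : ℝ) ^ (-(⌊s⌋.natAbs : ℝ)) ≤ (4 : ℝ) ^ (1 - |s|) := by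
    apply Real.rpow_le_rpow_of_exponent_le (by norm_num)
    linarith
  refine h4.trans ?_
  rw [show (1 : ℝ) - |s| = 1 + (-|s|) by ring, Real.rpow_add (by norm_num),
    Real.rpow_one, Real.rpow_def_of_pos (by norm_num)]
  have : Real.log 4 * (-|s|) = -(Real.log 4 / h) * |t| := by
    rw [hs, abs_div, abs_of_pos hh]
    field_simp
  rw [this]

lemma my_floor_eventually {h : ℝ} (hh : 0 < h) {T : ℕ → ℝ} {τ t : ℝ}
    (hT : Filter.Tendsto T Filter.atTop (nhds τ)) (ht : ((⌊(t + τ) / h⌋ : ℤ) : ℝ) ≠ (t + τ) / h) :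
    ∀ᶠ n in Filter.atTop, ⌊(t + T n) / h⌋ = ⌊(t + τ) / h⌋ := by
  set i : ℤ := ⌊(t + τ) / h⌋ with hi
  have h1 : (i : ℝ) < (t + τ) / h := lt_of_le_of_ne (Int.floor_le _) ht
  have h2 : (t + τ) / h < i + 1 := Int.lt_floor_add_one _
  have hcont : Filter.Tendsto (fun n => (t + T n) / h) Filter.atTop (nhds ((t + τ) / h)) :=
    (tendsto_const_nhds.add hT).div_const h
  have hmem : Set.Ioo ((i : ℝ)) (i + 1) ∈ nhds ((t + τ) / h) := Ioo_mem_nhds h1 h2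
  filter_upwards [hcont.eventually_mem hmem] with n hn
  exact Int.floor_eq_iff.2 ⟨le_of_lt hn.1, hn.2⟩

lemma my_normalize {V : Type*} (E : V → V → Prop) {h : ℝ} (hh : 0 < h) {x : ℝ → V}
    (hx : x ∈ DeltaSpace E h) :
    ∃ p ∈ OmegaPaths E, ∃ τ ∈ Set.Icc (0 : ℝ) h, x = fun t => p ⌊(t + τ) / h⌋ := by
  obtain ⟨q, hq, σ, hσ⟩ := hx
  set k : ℤ := ⌊σ / h⌋ with hk
  refine ⟨fun i => q (i + k), ?_, σ - k * h, ⟨?_, ?_⟩, ?_⟩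
  · intro i
    show E (q (i + k)) (q (i + 1 + k))
    rw [show i + 1 + k = i + k + 1 by ring]
    exact hq (i + k)
  · have h1 : (k : ℝ) ≤ σ / h := Int.floor_le _
    have h2 := (le_div_iff₀ hh).1 h1
    linarith
  · have h1 : σ / h < k + 1 := Int.lt_floor_add_one _
    have h2 := (div_lt_iff₀ hh).1 h1
    nlinarith
  · rw [hσ]
    funext t
    have harg : (t + (σ - k * h)) / h = (t + σ) / h - k := by
      field_simp
      ring
    rw [harg, Int.floor_sub_intCast]
    congr 1
    ring

end Aux

/-- `Δ` is sequentially compact: every sequence in `Δ` has a subsequence converging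
(in the metric `d`) to an element of `Δ`. -/
theorem delta_seq_compact {V : Type*} [Fintype V] (E : V → V → Prop) (h : ℝ) (hh : 0 < h)
    (u : ℕ → (ℝ → V)) (hu : ∀ n, u n ∈ DeltaSpace E h) :
    ∃ φ : ℕ → ℕ, StrictMono φ ∧ ∃ x ∈ DeltaSpace E h,
      Filter.Tendsto (fun n => dInt h (u (φ n)) x) Filter.atTop (nhds 0) := by
  classical
  -- Step 0: normalized representations
  have H : ∀ n, ∃ p ∈ OmegaPaths E, ∃ τ ∈ Set.Icc (0 : ℝ) h,
      u n = fun t => p ⌊(t + τ) / h⌋ := fun n => my_normalize E hh (hu n)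
  choose P hPath T hTmem hrep using H
  -- Step 1: compactness
  letI : TopologicalSpace V := ⊥
  haveI : DiscreteTopology V := ⟨rfl⟩
  have hK : IsCompact ((Set.univ : Set (ℤ → V)) ×ˢ Set.Icc (0 : ℝ) h) :=
    isCompact_univ.prod isCompact_Icc
  have hz : ∀ n, (P n, T n) ∈ (Set.univ : Set (ℤ → V)) ×ˢ Set.Icc (0 : ℝ) h :=
    fun n => ⟨Set.mem_univ _, hTmem n⟩
  obtain ⟨⟨p, τ⟩, hpτ, φ, hφ, hconv⟩ := hK.isSeqCompact hz
  have hTconv : Filter.Tendsto (fun n => T (φ n)) Filter.atTop (nhds τ) :=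
    (continuous_snd.tendsto _).comp hconv
  have hPconv : Filter.Tendsto (fun n => P (φ n)) Filter.atTop (nhds p) :=
    (continuous_fst.tendsto _).comp hconv
  have hPev : ∀ i : ℤ, ∀ᶠ n in Filter.atTop, P (φ n) i = p i := by
    intro i
    have h2 : Filter.Tendsto (fun n => P (φ n) i) Filter.atTop (nhds (p i)) :=
      tendsto_pi_nhds.mp hPconv i
    exact h2.eventually_mem (IsOpen.mem_nhds (isOpen_discrete {p i}) rfl)
  have hpPath : p ∈ OmegaPaths E := by
    intro i
    obtain ⟨n, h1, h2⟩ := ((hPev i).and (hPev (i + 1))).exists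
    rw [← h1, ← h2]
    exact hPath (φ n) i
  refine ⟨φ, hφ, fun t => p ⌊(t + τ) / h⌋, ⟨p, hpPath, τ, rfl⟩, ?_⟩
  -- Step 2: convergence of the integrals
  set x : ℝ → V := fun t => p ⌊(t + τ) / h⌋ with hx
  set F : ℕ → ℝ → ℝ := fun n t =>
    (1 / 4 ^ (⌊t / h⌋.natAbs) : ℝ) * (if u (φ n) t = x t then (0 : ℝ) else 1) with hF
  have hb : 0 < Real.log 4 / h := div_pos (Real.log_pos (by norm_num)) hh
  set bound : ℝ → ℝ := fun t => 4 * Real.exp (-(Real.log 4 / h) * |t|) with hbound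
  have key : Filter.Tendsto (fun n => ∫ t : ℝ, F n t) Filter.atTop (nhds (∫ _ : ℝ, (0 : ℝ))) := by
    apply tendsto_integral_of_dominated_convergence bound
    · intro n
      have : F n = fun t => (1 / 4 ^ (⌊t / h⌋.natAbs) : ℝ) *
          (if P (φ n) ⌊(t + T (φ n)) / h⌋ = p ⌊(t + τ) / h⌋ then (0 : ℝ) else 1) := by
        funext t
        simp only [hF, hrep (φ n), hx]
      rw [this]
      exact (my_meas_aux (P (φ n)) p (T (φ n)) τ h).aestronglyMeasurable
    · exact (my_integrable_exp_neg_abs hb).const_mul 4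
    · intro n
      filter_upwards with t
      have h1 : ‖F n t‖ ≤ (1 / 4 ^ (⌊t / h⌋.natAbs) : ℝ) := by
        rw [hF]
        simp only [norm_mul, Real.norm_eq_abs]
        have hw : (0 : ℝ) ≤ 1 / 4 ^ (⌊t / h⌋.natAbs) := by positivity
        rw [abs_of_nonneg hw]
        split_ifs <;> simp [hw]
      exact h1.trans (my_w_le hh t)
    · -- a.e. pointwise convergence to 0
      have hnull : (Set.range fun k : ℤ => k * h - τ : Set ℝ).Countable :=
        Set.countable_range _
      have hae : ∀ᵐ t : ℝ, t ∉ (Set.range fun k : ℤ => k * h - τ) := by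
        rw [MeasureTheory.ae_iff]
        simp only [not_not]
        exact hnull.measure_zero volume
      filter_upwards [hae] with t ht
      -- t is not of the form k*h - τ
      have hne : ((⌊(t + τ) / h⌋ : ℤ) : ℝ) ≠ (t + τ) / h := by
        intro hcontra
        have h2 : t + τ = (⌊(t + τ) / h⌋ : ℝ) * h := (div_eq_iff hh.ne').1 hcontra.symm
        exact ht ⟨⌊(t + τ) / h⌋, by simp only; linarith⟩
      have hfloor := my_floor_eventually hh hTconv hne
      have hcoord := hPev ⌊(t + τ) / h⌋
      have hev : ∀ᶠ n in Filter.atTop, F n t = 0 := by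
        filter_upwards [hfloor, hcoord] with n h1 h2
        have : u (φ n) t = x t := by
          rw [hrep (φ n), hx]
          simp only
          rw [h1, h2]
        rw [hF]
        simp [this]
      exact Filter.Tendsto.congr' (by filter_upwards [hev] with n hn; exact hn.symm)
        tendsto_const_nhds
  rw [integral_zero] at key
  have : Filter.Tendsto (fun n => (1 / h) * ∫ t : ℝ, F n t) Filter.atTop (nhds ((1 / h) * 0)) :=
    key.const_mul _
  rw [mul_zero] at this
  exact this
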